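/- A function φ : B_b(S) → ℝ is a max-stable monetary risk measure if and only if its concentration function J : Borel sets → [−∞, 0], J_A := inf_{r∈ℝ} φ(r·1_{A^c}), is a max-stable penalty and φ(f) = sup_{r ∈ ℝ} { r + J_{{f > r}} } for all f ∈ B_b(S). -/

import Mathlib

open MeasureTheory Set Metric Filter Topology

noncomputable section

/-- The bounded Borel measurable functions on `S`. -/
def Bb (S : Type*) [MeasurableSpace S] : Set (S → ℝ) :=
  {f | Measurable f ∧ ∃ C : ℝ, ∀ x, |f x| ≤ C}

/-- `φ` is a monetary risk measure on the class of functions `X`: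
normalization, translation property and monotonicity. -/
def Monetary {S : Type*} (X : Set (S → ℝ)) (φ : (S → ℝ) → ℝ) : Prop :=
  φ 0 = 0 ∧
  (∀ f ∈ X, ∀ c : ℝ, φ (f + fun _ => c) = φ f + c) ∧
  (∀ f ∈ X, ∀ g ∈ X, (∀ x, f x ≤ g x) → φ f ≤ φ g)

/-- `φ` is max-stable on `X`. -/
def MaxStable {S : Type*} (X : Set (S → ℝ)) (φ : (S → ℝ) → ℝ) : Prop :=
  ∀ f ∈ X, ∀ g ∈ X, φ (f ⊔ g) ≤ max (φ f) (φ g)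

/-- The concentration function `J_A = inf_{r ∈ ℝ} φ(r · 1_{Aᶜ})`. -/
def conc {S : Type*} (φ : (S → ℝ) → ℝ) (A : Set S) : EReal :=
  ⨅ r : ℝ, (φ (Aᶜ.indicator fun _ => r) : EReal)

/-- The minimal rate function `I_min(x) = sup_{f ∈ C_b(S)} (f(x) - φ(f))`,
with values in `[0, +∞] ⊆ EReal`. -/
def IminE {S : Type*} [TopologicalSpace S] (φ : (S → ℝ) → ℝ) (x : S) : EReal :=
  ⨆ f : BoundedContinuousFunction S ℝ, ((f x - φ ⇑f : ℝ) : EReal)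

-- helpers
lemma ereal_le_of_forall_sub {a : ℝ} {b : EReal}
    (h : ∀ ε : ℝ, 0 < ε → ((a - ε : ℝ) : EReal) ≤ b) : (a : EReal) ≤ b := by
  refine le_of_forall_gt_imp_ge_of_dense fun c hc => ?_
  induction c with
  | bot => exact absurd hc (by simp)
  | coe c =>
      by_cases hac : a ≤ c
      · exact_mod_cast hac
      · push_neg at hac
        have h2 := h (a - c) (sub_pos.2 hac)
        rw [sub_sub_cancel] at h2
        exact absurd (lt_of_le_of_lt h2 hc) (lt_irrefl _)
  | top => exact le_top

lemma ereal_add_iSup (c : ℝ) (g : ℝ → EReal) : (⨆ r, g r) + c = ⨆ r, (g r + c) := by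
  refine le_antisymm ?_ (iSup_le fun r => add_le_add_left (le_iSup g r) _)
  have h : (⨆ r, g r) ≤ (⨆ r, (g r + c)) - c := by
    refine iSup_le fun r => ?_
    rw [EReal.le_sub_iff_add_le (Or.inl (by simp)) (Or.inl (by simp))]
    exact le_iSup (fun r => g r + (c : EReal)) r
  calc (⨆ r, g r) + c ≤ ((⨆ r, (g r + c)) - c) + c := add_le_add_left h _
    _ = _ := EReal.sub_add_cancel

section Bblemmas
variable {S : Type*} [MeasurableSpace S]

lemma zero_mem_Bb : (0 : S → ℝ) ∈ Bb S :=
  ⟨measurable_const, 0, fun _ => by simp⟩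

lemma add_mem_Bb {f g : S → ℝ} (hf : f ∈ Bb S) (hg : g ∈ Bb S) : f + g ∈ Bb S := by
  obtain ⟨hfm, C1, hC1⟩ := hf
  obtain ⟨hgm, C2, hC2⟩ := hg
  exact ⟨hfm.add hgm, C1 + C2, fun x =>
    (abs_add_le _ _).trans (add_le_add (hC1 x) (hC2 x))⟩

lemma const_mem_Bb (c : ℝ) : (fun _ : S => c) ∈ Bb S :=
  ⟨measurable_const, |c|, fun _ => le_rfl⟩

lemma ind_mem_Bb {E : Set S} (hE : MeasurableSet E) (r : ℝ) :
    E.indicator (fun _ => r) ∈ Bb S := by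
  refine ⟨(measurable_const (a := r)).indicator hE, |r|, fun x => ?_⟩
  classical
  rw [Set.indicator_apply]
  split_ifs
  · exact le_rfl
  · simp [abs_nonneg]

lemma sup_mem_Bb {f g : S → ℝ} (hf : f ∈ Bb S) (hg : g ∈ Bb S) : f ⊔ g ∈ Bb S := by
  obtain ⟨hfm, C1, hC1⟩ := hf
  obtain ⟨hgm, C2, hC2⟩ := hg
  refine ⟨hfm.max hgm, max C1 C2, fun x => ?_⟩
  calc |(f ⊔ g) x| = |max (f x) (g x)| := rfl
    _ ≤ max |f x| |g x| := abs_max_le_max_abs_abs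
    _ ≤ max C1 C2 := max_le_max (hC1 x) (hC2 x)

end Bblemmas

section philemmas
variable {S : Type*} [MeasurableSpace S] {φ : (S → ℝ) → ℝ}

lemma phi_const (hM : Monetary (Bb S) φ) (r : ℝ) : φ (fun _ => r) = r := by
  have := hM.2.1 0 zero_mem_Bb r
  have h0 : (0 : S → ℝ) + (fun _ => r) = fun _ => r := by funext x; simp
  rw [h0, hM.1, zero_add] at this
  exact this

lemma conc_le (φ : (S → ℝ) → ℝ) (E : Set S) (s : ℝ) :
    conc φ E ≤ ((φ (Eᶜ.indicator fun _ => s) : ℝ) : EReal) := iInf_le _ s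

lemma le_conc {φ : (S → ℝ) → ℝ} {E : Set S} {b : EReal}
    (h : ∀ s : ℝ, b ≤ ((φ (Eᶜ.indicator fun _ => s) : ℝ) : EReal)) : b ≤ conc φ E :=
  le_iInf h

lemma conc_lt_iff {φ : (S → ℝ) → ℝ} {E : Set S} {c : EReal} :
    conc φ E < c ↔ ∃ s : ℝ, ((φ (Eᶜ.indicator fun _ => s) : ℝ) : EReal) < c := by
  unfold conc; exact iInf_lt_iff

lemma conc_le_zero (hM : Monetary (Bb S) φ) (E : Set S) : conc φ E ≤ 0 := by
  have h := conc_le φ E 0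
  have h2 : Eᶜ.indicator (fun _ => (0:ℝ)) = (0 : S → ℝ) := by
    funext x; simp [Set.indicator_apply]
  rw [h2, hM.1] at h
  exact h.trans_eq (by norm_cast)

lemma conc_ne_top (hM : Monetary (Bb S) φ) (E : Set S) : conc φ E ≠ ⊤ :=
  ((conc_le_zero hM E).trans_lt (by norm_num)).ne

-- monotone in the indicator value
lemma phi_ind_mono (hM : Monetary (Bb S) φ) {D : Set S} (hD : MeasurableSet D)
    {s t : ℝ} (hst : s ≤ t) :
    φ (D.indicator fun _ => s) ≤ φ (D.indicator fun _ => t) := by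
  refine hM.2.2 _ (ind_mem_Bb hD s) _ (ind_mem_Bb hD t) fun x => ?_
  classical
  rw [Set.indicator_apply, Set.indicator_apply]
  split_ifs
  · exact hst
  · exact le_rfl
end philemmas

section supfam
variable {S : Type*} [MeasurableSpace S] {φ : (S → ℝ) → ℝ}

def supFam (h : ℕ → S → ℝ) : ℕ → S → ℝ
  | 0 => h 0
  | n+1 => supFam h n ⊔ h (n+1)

lemma supFam_mem_Bb {h : ℕ → S → ℝ} (hB : ∀ i, h i ∈ Bb S) (n : ℕ) :
    supFam h n ∈ Bb S := by
  induction n with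
  | zero => exact hB 0
  | succ n ih => exact sup_mem_Bb ih (hB (n+1))

lemma le_supFam {h : ℕ → S → ℝ} {n i : ℕ} (hi : i ≤ n) (x : S) :
    h i x ≤ supFam h n x := by
  induction n with
  | zero =>
      obtain rfl : i = 0 := Nat.le_zero.1 hi
      exact le_rfl
  | succ n ih =>
      rcases eq_or_lt_of_le hi with rfl | h'
      · exact le_max_right _ _
      · exact (ih (Nat.lt_succ_iff.1 h')).trans (le_max_left _ _)

lemma phi_supFam (hM : Monetary (Bb S) φ) (hX : MaxStable (Bb S) φ)
    {h : ℕ → S → ℝ} (hB : ∀ i, h i ∈ Bb S) (n : ℕ) :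
    ∃ i ≤ n, φ (supFam h n) ≤ φ (h i) := by
  induction n with
  | zero => exact ⟨0, le_rfl, le_rfl⟩
  | succ n ih =>
      have hφ := hX (supFam h n) (supFam_mem_Bb hB n) (h (n+1)) (hB (n+1))
      rcases max_cases (φ (supFam h n)) (φ (h (n+1))) with ⟨hmx, _⟩ | ⟨hmx, _⟩
      · obtain ⟨i, hi, hle⟩ := ih
        exact ⟨i, hi.trans (Nat.le_succ n), (hφ.trans_eq hmx).trans hle⟩
      · exact ⟨n+1, le_rfl, hφ.trans_eq hmx⟩

lemma phi_le_of_cover (hM : Monetary (Bb S) φ) (hX : MaxStable (Bb S) φ)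
    {f : S → ℝ} (hf : f ∈ Bb S) {h : ℕ → S → ℝ} (hB : ∀ i, h i ∈ Bb S) (n : ℕ)
    (hcov : ∀ x, ∃ i ≤ n, f x ≤ h i x) :
    ∃ i ≤ n, φ f ≤ φ (h i) := by
  have hfs : φ f ≤ φ (supFam h n) := by
    refine hM.2.2 f hf _ (supFam_mem_Bb hB n) fun x => ?_
    obtain ⟨i, hi, hle⟩ := hcov x
    exact hle.trans (le_supFam hi x)
  obtain ⟨i, hi, hle⟩ := phi_supFam hM hX hB n
  exact ⟨i, hi, hfs.trans hle⟩

end supfam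

section forward
variable {S : Type*} [MeasurableSpace S] {φ : (S → ℝ) → ℝ}

lemma conc_empty (hM : Monetary (Bb S) φ) : conc φ (∅ : Set S) = ⊥ := by
  have h : ∀ r : ℝ, φ ((∅ : Set S)ᶜ.indicator fun _ => r) = r := by
    intro r
    rw [Set.compl_empty, Set.indicator_univ]
    exact phi_const hM r
  unfold conc
  simp only [h]
  rw [iInf_eq_bot]
  intro b hb
  induction b with
  | bot => exact absurd hb (lt_irrefl _)
  | coe b => exact ⟨b - 1, by exact_mod_cast sub_one_lt b⟩
  | top => exact ⟨0, by norm_num⟩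

lemma conc_univ (hM : Monetary (Bb S) φ) : conc φ (univ : Set S) = 0 := by
  have h : ∀ r : ℝ, φ ((univ : Set S)ᶜ.indicator fun _ => r) = 0 := by
    intro r
    rw [Set.compl_univ, Set.indicator_empty]
    exact hM.1
  unfold conc
  simp only [h]
  rw [iInf_const]
  norm_cast

lemma conc_mono (hM : Monetary (Bb S) φ) {A B : Set S}
    (hA : MeasurableSet A) (hB : MeasurableSet B) (hAB : A ⊆ B) :
    conc φ A ≤ conc φ B := by
  refine le_conc fun r => ?_
  calc conc φ A ≤ ((φ (Aᶜ.indicator fun _ => min r 0) : ℝ) : EReal) := conc_le φ A _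
    _ ≤ ((φ (Bᶜ.indicator fun _ => r) : ℝ) : EReal) := by
        rw [EReal.coe_le_coe_iff]
        refine hM.2.2 _ (ind_mem_Bb hA.compl _) _ (ind_mem_Bb hB.compl _) fun x => ?_
        classical
        rw [Set.indicator_apply, Set.indicator_apply]
        by_cases hxB : x ∈ Bᶜ
        · rw [if_pos hxB, if_pos (compl_subset_compl.2 hAB hxB)]
          exact min_le_left _ _
        · rw [if_neg hxB]
          split_ifs
          · exact min_le_right _ _
          · exact le_rfl

lemma conc_maxstable (hM : Monetary (Bb S) φ) (hX : MaxStable (Bb S) φ)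
    {A B : Set S} (hA : MeasurableSet A) (hB : MeasurableSet B) :
    conc φ (A ∪ B) ≤ max (conc φ A) (conc φ B) := by
  refine le_of_forall_gt_imp_ge_of_dense fun c hc => ?_
  obtain ⟨r1, hr1⟩ := conc_lt_iff.1 ((le_max_left _ _).trans_lt hc)
  obtain ⟨r2, hr2⟩ := conc_lt_iff.1 ((le_max_right _ _).trans_lt hc)
  set r : ℝ := min (min r1 r2) 0 with hrdef
  have hr0 : r ≤ 0 := min_le_right _ _
  have hkey : (A ∪ B)ᶜ.indicator (fun _ => r) =
      (Aᶜ.indicator fun _ => r) ⊔ (Bᶜ.indicator fun _ => r) := by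
    classical
    funext x
    rw [Pi.sup_apply]
    by_cases hxA : x ∈ A <;> by_cases hxB : x ∈ B <;>
      simp [Set.indicator_apply, Set.compl_union, hxA, hxB,
        max_eq_left hr0, max_eq_right hr0, max_self]
  have h1 : ((φ (Aᶜ.indicator fun _ => r) : ℝ) : EReal) < c := by
    refine lt_of_le_of_lt ?_ hr1
    exact_mod_cast phi_ind_mono hM hA.compl ((min_le_left _ _).trans (min_le_left _ _))
  have h2 : ((φ (Bᶜ.indicator fun _ => r) : ℝ) : EReal) < c := by
    refine lt_of_le_of_lt ?_ hr2
    exact_mod_cast phi_ind_mono hM hB.compl ((min_le_left _ _).trans (min_le_right _ _))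
  have hstep : φ ((A ∪ B)ᶜ.indicator fun _ => r) ≤
      max (φ (Aᶜ.indicator fun _ => r)) (φ (Bᶜ.indicator fun _ => r)) := by
    rw [hkey]
    exact hX _ (ind_mem_Bb hA.compl r) _ (ind_mem_Bb hB.compl r)
  have : ((φ ((A ∪ B)ᶜ.indicator fun _ => r) : ℝ) : EReal) < c := by
    rcases max_cases (φ (Aᶜ.indicator fun _ => r)) (φ (Bᶜ.indicator fun _ => r)) with
      ⟨hmx, _⟩ | ⟨hmx, _⟩
    · exact lt_of_le_of_lt (by exact_mod_cast hstep.trans_eq hmx) h1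
    · exact lt_of_le_of_lt (by exact_mod_cast hstep.trans_eq hmx) h2
  exact ((conc_le φ (A ∪ B) r).trans_lt this).le

end forward

section rep
variable {S : Type*} [MeasurableSpace S] {φ : (S → ℝ) → ℝ}

lemma rep_ge (hM : Monetary (Bb S) φ) {f : S → ℝ} (hf : f ∈ Bb S) :
    (⨆ r : ℝ, ((r : EReal) + conc φ {x | r < f x})) ≤ (φ f : EReal) := by
  obtain ⟨hfm, C0, hC0⟩ := hf
  set C : ℝ := max C0 0 with hCdef
  have hC : ∀ x, |f x| ≤ C := fun x => (hC0 x).trans (le_max_left _ _)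
  refine iSup_le fun r => ?_
  set s : ℝ := -C - |r| - 1 with hsdef
  have hstep : conc φ {x | r < f x} ≤
      ((φ ({x | r < f x}ᶜ.indicator fun _ => s) : ℝ) : EReal) := conc_le φ _ s
  have hle : φ ({x | r < f x}ᶜ.indicator fun _ => s) + r ≤ φ f := by
    have hms : MeasurableSet {x | r < f x} := hfm measurableSet_Ioi
    have htr := hM.2.1 ({x | r < f x}ᶜ.indicator fun _ => s)
      (ind_mem_Bb hms.compl s) r
    rw [← htr]
    refine hM.2.2 _ (add_mem_Bb (ind_mem_Bb hms.compl s) (const_mem_Bb r)) _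
      ⟨hfm, C0, hC0⟩ fun x => ?_
    classical
    rw [Pi.add_apply, Set.indicator_apply]
    split_ifs with hx
    · have hfx : ¬ r < f x := hx
      have h1 : -C ≤ f x := neg_le_of_abs_le (hC x)
      have h2 : r - |r| ≤ 0 := sub_nonpos.2 (le_abs_self r)
      rw [hsdef]; push_neg at hfx; linarith
    · have hfx : r < f x := not_not.1 hx
      linarith
  calc (r : EReal) + conc φ {x | r < f x}
      ≤ (r : EReal) + ((φ ({x | r < f x}ᶜ.indicator fun _ => s) : ℝ) : EReal) :=
        add_le_add_right hstep _
    _ = ((φ ({x | r < f x}ᶜ.indicator fun _ => s) + r : ℝ) : EReal) := by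
        rw [← EReal.coe_add]; norm_cast; ring
    _ ≤ (φ f : EReal) := EReal.coe_le_coe_iff.2 hle

lemma rep_le (hM : Monetary (Bb S) φ) (hX : MaxStable (Bb S) φ)
    {f : S → ℝ} (hf : f ∈ Bb S) :
    (φ f : EReal) ≤ ⨆ r : ℝ, ((r : EReal) + conc φ {x | r < f x}) := by
  classical
  obtain ⟨hfm, C0, hC0⟩ := hf
  set C : ℝ := max C0 0 with hCdef
  have hC : ∀ x, |f x| ≤ C := fun x => (hC0 x).trans (le_max_left _ _)
  have hC0' : (0:ℝ) ≤ C := le_max_right _ _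
  refine ereal_le_of_forall_sub fun ε hε => ?_
  -- choose grid size
  obtain ⟨n, hn⟩ := exists_nat_ge ((2*C+1)/(ε/2))
  have hn0 : 0 < (n:ℝ) := lt_of_lt_of_le (div_pos (by linarith) (by linarith)) hn
  set δ : ℝ := (2*C+1)/n with hδdef
  have hδpos : 0 < δ := div_pos (by linarith) hn0
  have h2C : (n:ℝ) * δ = 2*C+1 := mul_div_cancel₀ _ (ne_of_gt hn0)
  have hδ : δ ≤ ε/2 := by
    have h1 : 2*C+1 ≤ (n:ℝ) * (ε/2) := (div_le_iff₀ (by linarith)).1 hn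
    rw [hδdef, div_le_iff₀ hn0]
    linarith
  set r : ℕ → ℝ := fun i => -C - 1 + i * δ with hrdef
  have hr : ∀ i : ℕ, r (i+1) = r i + δ := by
    intro i; simp only [hrdef]; push_cast; ring
  have hrn : r n = C := by rw [hrdef]; simp only []; rw [h2C]; ring
  have hms : ∀ i : ℕ, MeasurableSet {x | r i < f x} := fun i => hfm measurableSet_Ioi
  -- choose indicator levels
  have hsel : ∀ i : ℕ, ∃ s : ℝ,
      ((φ ({x | r i < f x}ᶜ.indicator fun _ => s) : ℝ) : EReal) <
        (if conc φ {x | r i < f x} = ⊥ then ((φ f - r (i+1) - 1 : ℝ) : EReal)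
         else conc φ {x | r i < f x} + ((ε/2 : ℝ) : EReal)) := by
    intro i
    apply conc_lt_iff.1
    split_ifs with hb
    · rw [hb]; exact bot_lt_iff_ne_bot.2 (EReal.coe_ne_bot _)
    · set t : ℝ := (conc φ {x | r i < f x}).toReal with htdef
      have hco : (t : EReal) = conc φ {x | r i < f x} :=
        EReal.coe_toReal (conc_ne_top hM _) hb
      rw [← hco, ← EReal.coe_add, EReal.coe_lt_coe_iff]
      linarith
  choose s hs using hsel
  set h : ℕ → S → ℝ :=
    fun i => ({x | r i < f x}ᶜ.indicator fun _ => s i) + fun _ => r (i+1) with hhdef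
  have hhB : ∀ i, h i ∈ Bb S := fun i =>
    add_mem_Bb (ind_mem_Bb (hms i).compl _) (const_mem_Bb _)
  -- the cover
  have hcov : ∀ x, ∃ i ≤ n, f x ≤ h i x := by
    intro x
    have hPn : f x ≤ r n := hrn ▸ (abs_le.1 (hC x)).2
    have hex : ∃ k, f x ≤ r k := ⟨n, hPn⟩
    set m := Nat.find hex with hmdef
    have hm : f x ≤ r m := Nat.find_spec hex
    have hmn : m ≤ n := Nat.find_min' hex hPn
    have hm0 : m ≠ 0 := by
      intro h0
      have h1 : f x ≤ r 0 := h0 ▸ hm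
      have h2 : r 0 = -C - 1 := by rw [hrdef]; push_cast; ring
      have h3 : -C ≤ f x := neg_le_of_abs_le (hC x)
      rw [h2] at h1; linarith
    refine ⟨m - 1, le_trans (Nat.sub_le _ _) hmn, ?_⟩
    have hlt : r (m-1) < f x :=
      not_le.1 (Nat.find_min hex (Nat.pred_lt hm0))
    have hxA : x ∈ {y | r (m-1) < f y} := hlt
    have hval : h (m-1) x = r (m-1+1) := by
      rw [hhdef]
      simp only [Pi.add_apply]
      rw [Set.indicator_of_notMem (by simpa using hxA), zero_add]
    rw [hval, Nat.sub_add_cancel (Nat.one_le_iff_ne_zero.2 hm0)]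
    exact hm
  obtain ⟨i, hin, hφle⟩ := phi_le_of_cover hM hX ⟨hfm, C0, hC0⟩ hhB n hcov
  have htr : φ (h i) = φ ({x | r i < f x}ᶜ.indicator fun _ => s i) + r (i+1) :=
    hM.2.1 _ (ind_mem_Bb (hms i).compl _) _
  rw [htr] at hφle
  have hsi := hs i
  by_cases hb : conc φ {x | r i < f x} = ⊥
  · rw [if_pos hb, EReal.coe_lt_coe_iff] at hsi
    exfalso; linarith
  · rw [if_neg hb] at hsi
    set t : ℝ := (conc φ {x | r i < f x}).toReal with htdef
    have hco : (t : EReal) = conc φ {x | r i < f x} :=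
      EReal.coe_toReal (conc_ne_top hM _) hb
    rw [← hco, ← EReal.coe_add, EReal.coe_lt_coe_iff] at hsi
    have hri : r (i+1) = r i + δ := hr i
    have hfin : φ f - ε ≤ r i + t := by linarith
    calc ((φ f - ε : ℝ) : EReal) ≤ ((r i + t : ℝ) : EReal) := EReal.coe_le_coe_iff.2 hfin
      _ = (r i : EReal) + (t : EReal) := EReal.coe_add _ _
      _ = (r i : EReal) + conc φ {x | r i < f x} := by rw [hco]
      _ ≤ ⨆ rr : ℝ, ((rr : EReal) + conc φ {x | rr < f x}) :=
          le_iSup (fun rr : ℝ => (rr : EReal) + conc φ {x | rr < f x}) (r i)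

end rep

section backward
variable {S : Type*} [MeasurableSpace S] {φ : (S → ℝ) → ℝ}

lemma backward_all
    (h1 : conc φ (∅ : Set S) = ⊥)
    (h2 : conc φ (univ : Set S) = 0)
    (h3 : ∀ A B : Set S, MeasurableSet A → MeasurableSet B → A ⊆ B →
        conc φ A ≤ conc φ B)
    (h4 : ∀ A B : Set S, MeasurableSet A → MeasurableSet B →
        conc φ (A ∪ B) ≤ max (conc φ A) (conc φ B))
    (h5 : ∀ f ∈ Bb S, (φ f : EReal) = ⨆ r : ℝ, ((r : EReal) + conc φ {x | r < f x})) :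
    Monetary (Bb S) φ ∧ MaxStable (Bb S) φ := by
  rcases isEmpty_or_nonempty S with hS | hS
  · exfalso
    rw [Set.univ_eq_empty_iff.2 hS] at h2
    rw [h1] at h2
    exact absurd h2 (by simp)
  -- φ 0 = 0
  have hzero : φ 0 = 0 := by
    have h0 := h5 0 zero_mem_Bb
    have hset : ∀ rr : ℝ, {x : S | rr < (0 : S → ℝ) x} = {x : S | rr < 0} := by
      intro rr; rfl
    have hval : (⨆ r : ℝ, ((r : EReal) + conc φ {x : S | r < (0 : S → ℝ) x})) = (0 : EReal) := by
      refine le_antisymm (iSup_le fun r => ?_) ?_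
      · by_cases hrneg : r < 0
        · have huniv : {x : S | r < (0 : S → ℝ) x} = univ :=
            eq_univ_iff_forall.2 fun x => hrneg
          rw [huniv, h2, add_zero]
          exact_mod_cast hrneg.le
        · have hempty : {x : S | r < (0 : S → ℝ) x} = ∅ :=
            eq_empty_iff_forall_notMem.2 fun x hx => hrneg hx
          rw [hempty, h1]
          simp
      · refine le_trans (le_of_eq (by norm_cast : (0:EReal) = ((0:ℝ):EReal)))
          (ereal_le_of_forall_sub fun ε hε => ?_)
        have huniv : {x : S | -ε < (0 : S → ℝ) x} = univ :=
          eq_univ_iff_forall.2 fun x => by simpa using hε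
        calc ((0 - ε : ℝ) : EReal) = ((-ε : ℝ) : EReal) + conc φ {x : S | -ε < (0 : S → ℝ) x} := by
              rw [huniv, h2, add_zero]; norm_num
          _ ≤ _ := le_iSup (fun r : ℝ => (r : EReal) + conc φ {x : S | r < (0 : S → ℝ) x}) (-ε)
    rw [hval] at h0
    exact_mod_cast h0
  -- translation
  have htrans : ∀ f ∈ Bb S, ∀ c : ℝ, φ (f + fun _ => c) = φ f + c := by
    intro f hf c
    set F : S → ℝ := f + fun _ => c with hF
    have hfc : F ∈ Bb S := add_mem_Bb hf (const_mem_Bb c)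
    have hrep := h5 F hfc
    have hrepf := h5 f hf
    have hset : ∀ r : ℝ, {x | r < F x} = {x | r - c < f x} := by
      intro r; ext x
      simp only [hF, Pi.add_apply, Set.mem_setOf_eq]
      constructor <;> intro hh <;> linarith
    have hkey : (⨆ r : ℝ, ((r : EReal) + conc φ {x | r < F x})) =
        ((φ f : ℝ) : EReal) + (c : EReal) := by
      calc (⨆ r : ℝ, ((r : EReal) + conc φ {x | r < F x}))
          = ⨆ r : ℝ, ((r : EReal) + conc φ {x | r - c < f x}) :=
            iSup_congr fun r => by rw [hset r]
        _ = ⨆ sval : ℝ, (((sval + c : ℝ) : EReal) + conc φ {x | sval + c - c < f x}) :=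
            ((Equiv.addRight c).iSup_comp
              (g := fun r : ℝ => (r : EReal) + conc φ {x | r - c < f x})).symm
        _ = ⨆ sval : ℝ, (((sval : EReal) + conc φ {x | sval < f x}) + (c : EReal)) := by
            refine iSup_congr fun sval => ?_
            rw [add_sub_cancel_right, EReal.coe_add, add_assoc, add_comm (c : EReal), ← add_assoc]
        _ = (⨆ sval : ℝ, ((sval : EReal) + conc φ {x | sval < f x})) + (c : EReal) :=
            (ereal_add_iSup c _).symm
        _ = ((φ f : ℝ) : EReal) + (c : EReal) := by rw [← hrepf]
    rw [hkey, ← EReal.coe_add] at hrep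
    exact_mod_cast hrep
  -- monotonicity
  have hmono : ∀ f ∈ Bb S, ∀ g ∈ Bb S, (∀ x, f x ≤ g x) → φ f ≤ φ g := by
    intro f hf g hg hfg
    rw [← EReal.coe_le_coe_iff, h5 f hf, h5 g hg]
    refine iSup_mono fun r => add_le_add_right ?_ _
    refine h3 _ _ (hf.1 measurableSet_Ioi) (hg.1 measurableSet_Ioi) fun x hx => ?_
    exact lt_of_lt_of_le hx (hfg x)
  refine ⟨⟨hzero, htrans, hmono⟩, ?_⟩
  -- max stability
  intro f hf g hg
  have hfg : f ⊔ g ∈ Bb S := sup_mem_Bb hf hg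
  have hcoe : ((max (φ f) (φ g) : ℝ) : EReal) = max ((φ f : ℝ) : EReal) ((φ g : ℝ) : EReal) :=
    EReal.coe_strictMono.monotone.map_max
  rw [← EReal.coe_le_coe_iff, hcoe, h5 _ hfg]
  have hsetu : ∀ r : ℝ, {x | r < (f ⊔ g) x} = {x | r < f x} ∪ {x | r < g x} := by
    intro r; ext x
    simp only [Pi.sup_apply, Set.mem_setOf_eq, Set.mem_union, lt_sup_iff]
  refine iSup_le fun r => ?_
  calc (r : EReal) + conc φ {x | r < (f ⊔ g) x}
      ≤ (r : EReal) + max (conc φ {x | r < f x}) (conc φ {x | r < g x}) := by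
        rw [hsetu r]
        exact add_le_add_right (h4 _ _ (hf.1 measurableSet_Ioi) (hg.1 measurableSet_Ioi)) _
    _ ≤ max ((r : EReal) + conc φ {x | r < f x}) ((r : EReal) + conc φ {x | r < g x}) := by
        rcases max_cases (conc φ {x | r < f x}) (conc φ {x | r < g x}) with ⟨hmx, _⟩ | ⟨hmx, _⟩
        · rw [hmx]; exact le_max_left _ _
        · rw [hmx]; exact le_max_right _ _
    _ ≤ max ((φ f : ℝ) : EReal) ((φ g : ℝ) : EReal) := by
        refine max_le_max ?_ ?_
        · rw [h5 f hf]
          exact le_iSup (fun rr : ℝ => (rr : EReal) + conc φ {x | rr < f x}) r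
        · rw [h5 g hg]
          exact le_iSup (fun rr : ℝ => (rr : EReal) + conc φ {x | rr < g x}) r

end backward

theorem stmt9 {S : Type*} [MetricSpace S] [MeasurableSpace S] [BorelSpace S]
    (φ : (S → ℝ) → ℝ) :
    (Monetary (Bb S) φ ∧ MaxStable (Bb S) φ) ↔
      ((conc φ (∅ : Set S) = ⊥) ∧
       (conc φ (univ : Set S) = 0) ∧
       (∀ A B : Set S, MeasurableSet A → MeasurableSet B → A ⊆ B →
          conc φ A ≤ conc φ B) ∧
       (∀ A B : Set S, MeasurableSet A → MeasurableSet B →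
          conc φ (A ∪ B) ≤ max (conc φ A) (conc φ B)) ∧
       (∀ f ∈ Bb S, (φ f : EReal) = ⨆ r : ℝ, ((r : EReal) + conc φ {x | r < f x}))) := by
  constructor
  · rintro ⟨hM, hX⟩
    exact ⟨conc_empty hM, conc_univ hM,
      fun A B hA hB hAB => conc_mono hM hA hB hAB,
      fun A B hA hB => conc_maxstable hM hX hA hB,
      fun f hf => le_antisymm (rep_le hM hX hf) (rep_ge hM hf)⟩
  · rintro ⟨h1, h2, h3, h4, h5⟩
    exact backward_all h1 h2 h3 h4 h5
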